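/- Let Ψ = (ψ_n) be a Schauder basis of a Banach space X with dual system (ψ*_n). Then X and Ψ satisfy the inequality Σ_{n∈A} |a_n| ≤ V·|A|^r·‖Σ_{n∈B} a_n ψ_n‖ for all finite A ⊂ B ⊂ ℕ and scalars (a_n) if and only if for all finite A ⊂ ℕ and all unimodular scalars (ε_n), ‖Σ_{n∈A} ε_n ψ*_n‖_{X*} ≤ V·|A|^r. -/
import Mathlib

lemma eval_aux {𝕜 : Type*} [RCLike 𝕜] {X : Type*} [NormedAddCommGroup X]
    [NormedSpace 𝕜 X]
    (ψ : ℕ → X) (ψs : ℕ → X →L[𝕜] 𝕜)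
    (hbio : ∀ m n, ψs m (ψ n) = if m = n then 1 else 0)
    (B : Finset ℕ) (a : ℕ → 𝕜) (n : ℕ) :
    ψs n (∑ m ∈ B, a m • ψ m) = if n ∈ B then a n else 0 := by
  rw [map_sum]
  simp_rw [ContinuousLinearMap.map_smul, hbio, smul_eq_mul, mul_ite, mul_one, mul_zero,
    Finset.sum_ite_eq]

theorem stmt_9 {𝕜 : Type*} [RCLike 𝕜] {X : Type*} [NormedAddCommGroup X]
    [NormedSpace 𝕜 X] [CompleteSpace X]
    (ψ : ℕ → X) (ψs : ℕ → X →L[𝕜] 𝕜)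
    (hbio : ∀ m n, ψs m (ψ n) = if m = n then 1 else 0)
    (hdense : Dense (Submodule.span 𝕜 (Set.range ψ) : Set X))
    (V r : ℝ) (hV : 1 ≤ V) (hr : 0 < r) (hr1 : r ≤ 1) :
    (∀ (A B : Finset ℕ), A ⊆ B → ∀ a : ℕ → 𝕜,
        ∑ n ∈ A, ‖a n‖ ≤ V * (A.card : ℝ) ^ r * ‖∑ n ∈ B, a n • ψ n‖) ↔
      (∀ (A : Finset ℕ) (ε : ℕ → 𝕜), (∀ n, ‖ε n‖ = 1) →
        ‖∑ n ∈ A, ε n • ψs n‖ ≤ V * (A.card : ℝ) ^ r) := by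
  have hV0 : (0:ℝ) ≤ V := le_trans zero_le_one hV
  constructor
  · intro h A ε hε
    have hC : (0:ℝ) ≤ V * (A.card : ℝ) ^ r := by positivity
    apply ContinuousLinearMap.opNorm_le_bound _ hC
    -- prove on the dense span then extend by continuity
    have key : ∀ x ∈ Submodule.span 𝕜 (Set.range ψ),
        ‖(∑ n ∈ A, ε n • ψs n) x‖ ≤ V * (A.card : ℝ) ^ r * ‖x‖ := by
      intro x hx
      rw [Finsupp.mem_span_range_iff_exists_finsupp] at hx
      obtain ⟨c, hc⟩ := hx
      rw [Finsupp.sum] at hc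
      have hxB : x = ∑ m ∈ c.support, c m • ψ m := hc.symm
      have hval : (∑ n ∈ A, ε n • ψs n) x = ∑ n ∈ A ∩ c.support, ε n * c n := by
        rw [ContinuousLinearMap.sum_apply]
        simp_rw [ContinuousLinearMap.smul_apply, hxB, eval_aux ψ ψs hbio, smul_eq_mul,
          mul_ite, mul_zero]
        rw [Finset.sum_ite_mem]
      calc ‖(∑ n ∈ A, ε n • ψs n) x‖ ≤ ∑ n ∈ A ∩ c.support, ‖ε n * c n‖ := by
            rw [hval]; exact norm_sum_le _ _
        _ = ∑ n ∈ A ∩ c.support, ‖c n‖ := by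
            simp [norm_mul, hε]
        _ ≤ V * ((A ∩ c.support).card : ℝ) ^ r * ‖∑ m ∈ c.support, c m • ψ m‖ :=
            h _ _ Finset.inter_subset_right c
        _ ≤ V * (A.card : ℝ) ^ r * ‖x‖ := by
            rw [hxB]
            gcongr V * ?_ * _
            exact Real.rpow_le_rpow (by positivity)
              (by exact_mod_cast Finset.card_le_card Finset.inter_subset_left) hr.le
    have hclosed : IsClosed {x : X | ‖(∑ n ∈ A, ε n • ψs n) x‖ ≤ V * (A.card : ℝ) ^ r * ‖x‖} := by
      apply isClosed_le
      · exact ((∑ n ∈ A, ε n • ψs n).continuous.norm)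
      · exact continuous_const.mul continuous_norm
    intro x
    have : closure (Submodule.span 𝕜 (Set.range ψ) : Set X) ⊆
        {x : X | ‖(∑ n ∈ A, ε n • ψs n) x‖ ≤ V * (A.card : ℝ) ^ r * ‖x‖} :=
      hclosed.closure_subset_iff.mpr key
    exact this (hdense.closure_eq ▸ Set.mem_univ x)
  · intro h A B hAB a
    set ε : ℕ → 𝕜 := fun n => if a n = 0 then 1 else (‖a n‖ : 𝕜) / a n with hεdef
    have hε : ∀ n, ‖ε n‖ = 1 := by
      intro n
      by_cases hn : a n = 0
      · simp [hεdef, hn]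
      · simp only [hεdef, hn, if_false, norm_div, RCLike.norm_ofNat]
        rw [RCLike.norm_ofReal, abs_norm, div_self (norm_ne_zero_iff.mpr hn)]
    have hεa : ∀ n, ε n * a n = (‖a n‖ : 𝕜) := by
      intro n
      by_cases hn : a n = 0
      · simp [hεdef, hn]
      · simp [hεdef, hn, div_mul_cancel₀]
    have hval : (∑ n ∈ A, ε n • ψs n) (∑ m ∈ B, a m • ψ m)
        = ((∑ n ∈ A, ‖a n‖ : ℝ) : 𝕜) := by
      rw [ContinuousLinearMap.sum_apply]
      have hterm : ∀ n ∈ A, (ε n • ψs n) (∑ m ∈ B, a m • ψ m) = (‖a n‖ : 𝕜) := by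
        intro n hn
        rw [ContinuousLinearMap.smul_apply, eval_aux ψ ψs hbio, if_pos (hAB hn), smul_eq_mul, hεa]
      rw [Finset.sum_congr rfl hterm]
      push_cast
      ring
    have h1 : ∑ n ∈ A, ‖a n‖ = ‖(∑ n ∈ A, ε n • ψs n) (∑ m ∈ B, a m • ψ m)‖ := by
      rw [hval, RCLike.norm_ofReal, abs_of_nonneg (Finset.sum_nonneg fun n _ => norm_nonneg _)]
    rw [h1]
    calc ‖(∑ n ∈ A, ε n • ψs n) (∑ m ∈ B, a m • ψ m)‖
        ≤ ‖∑ n ∈ A, ε n • ψs n‖ * ‖∑ m ∈ B, a m • ψ m‖ :=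
          ContinuousLinearMap.le_opNorm _ _
      _ ≤ (V * (A.card : ℝ) ^ r) * ‖∑ m ∈ B, a m • ψ m‖ := by
          gcongr; exact h A ε hε
      _ = V * (A.card : ℝ) ^ r * ‖∑ m ∈ B, a m • ψ m‖ := by ring
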